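/- For every ρ > 0 and every positive integer k, the equation τ·sin(τ/2) - ρ·cos(τ/2) = 0 has exactly one solution τ in the open interval ((2k-2)π, (2k-1)π). -/

import Mathlib

open Real

theorem char_eq_A1_unique_root (ρ : ℝ) (hρ : 0 < ρ) (k : ℕ) (hk : 1 ≤ k) :
    ∃! τ : ℝ, τ ∈ Set.Ioo ((2 * (k : ℝ) - 2) * π) ((2 * (k : ℝ) - 1) * π) ∧
      τ * Real.sin (τ / 2) - ρ * Real.cos (τ / 2) = 0 := by
  obtain ⟨m, rfl⟩ : ∃ m, k = m + 1 := ⟨k - 1, (Nat.succ_pred_eq_of_pos hk).symm⟩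
  have hπ := Real.pi_pos
  set a : ℝ := 2 * m * π with ha_def
  set b : ℝ := (2 * m + 1) * π with hb_def
  have e1 : (2 * ((m + 1 : ℕ) : ℝ) - 2) * π = a := by push_cast [ha_def]; ring
  have e2 : (2 * ((m + 1 : ℕ) : ℝ) - 1) * π = b := by push_cast [hb_def]; ring
  rw [e1, e2]
  have hab : a < b := by
    rw [ha_def, hb_def]; nlinarith [hπ]
  have ha0 : 0 ≤ a := by positivity
  set ε : ℝ := (-1 : ℝ) ^ m with hε_def
  have hε : ε * ε = 1 := by
    rw [hε_def, ← sq, ← pow_mul, mul_comm, pow_mul, neg_one_sq, one_pow]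
  have hεne : ε ≠ 0 := by
    intro h; rw [h, mul_zero] at hε; norm_num at hε
  have hsin : ∀ τ ∈ Set.Ioo a b, 0 < ε * Real.sin (τ / 2) := by
    rintro τ ⟨h1, h2⟩
    have ht1 : 0 < τ / 2 - m * π := by rw [ha_def] at h1; linarith
    have ht2 : τ / 2 - m * π < π / 2 := by rw [hb_def] at h2; linarith
    have hs : Real.sin (τ / 2) = (-1) ^ m * Real.sin (τ / 2 - m * π) := by
      rw [show τ / 2 = (τ / 2 - m * π) + m * π by ring, Real.sin_add_nat_mul_pi]
      ring_nf
    rw [hs, ← hε_def, ← mul_assoc, hε, one_mul]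
    exact Real.sin_pos_of_pos_of_lt_pi ht1 (by linarith)
  have hcos : ∀ τ ∈ Set.Ioo a b, 0 < ε * Real.cos (τ / 2) := by
    rintro τ ⟨h1, h2⟩
    have ht1 : 0 < τ / 2 - m * π := by rw [ha_def] at h1; linarith
    have ht2 : τ / 2 - m * π < π / 2 := by rw [hb_def] at h2; linarith
    have hc : Real.cos (τ / 2) = (-1) ^ m * Real.cos (τ / 2 - m * π) := by
      rw [show τ / 2 = (τ / 2 - m * π) + m * π by ring, Real.cos_add_nat_mul_pi]
      ring_nf
    rw [hc, ← hε_def, ← mul_assoc, hε, one_mul]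
    exact Real.cos_pos_of_mem_Ioo ⟨by linarith, ht2⟩
  set g : ℝ → ℝ := fun τ => ε * (τ * Real.sin (τ / 2) - ρ * Real.cos (τ / 2)) with hg_def
  have hgc : Continuous g := by
    apply Continuous.mul continuous_const
    exact ((continuous_id.mul ((Real.continuous_sin).comp (continuous_id.div_const 2)))).sub
      (continuous_const.mul ((Real.continuous_cos).comp (continuous_id.div_const 2)))
  have hderiv : ∀ τ : ℝ, HasDerivAt g
      (ε * (Real.sin (τ / 2) + τ * (Real.cos (τ / 2) * (1 / 2)) + ρ * (Real.sin (τ / 2) * (1 / 2)))) τ := by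
    intro τ
    have hhalf : HasDerivAt (fun x : ℝ => x / 2) (1 / 2) τ := by
      simpa using (hasDerivAt_id τ).div_const 2
    have hs : HasDerivAt (fun x : ℝ => Real.sin (x / 2)) (Real.cos (τ / 2) * (1 / 2)) τ :=
      (Real.hasDerivAt_sin _).comp τ hhalf
    have hc : HasDerivAt (fun x : ℝ => Real.cos (x / 2)) (-Real.sin (τ / 2) * (1 / 2)) τ :=
      (Real.hasDerivAt_cos _).comp τ hhalf
    have h1 : HasDerivAt (fun x : ℝ => x * Real.sin (x / 2))
        (1 * Real.sin (τ / 2) + τ * (Real.cos (τ / 2) * (1 / 2))) τ :=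
      (hasDerivAt_id τ).mul hs
    have h2 := (h1.sub (hc.const_mul ρ)).const_mul ε
    refine h2.congr_deriv ?_
    ring
  have hderivpos : ∀ τ ∈ Set.Ioo a b, 0 < deriv g τ := by
    intro τ hτ
    rw [(hderiv τ).deriv]
    have hs := hsin τ hτ
    have hc := hcos τ hτ
    have hτpos : 0 < τ := lt_of_le_of_lt ha0 hτ.1
    nlinarith [mul_pos hτpos hc, mul_pos hρ hs]
  have hmono : StrictMonoOn g (Set.Icc a b) := by
    apply strictMonoOn_of_deriv_pos (convex_Icc a b) hgc.continuousOn
    intro x hx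
    rw [interior_Icc] at hx
    exact hderivpos x hx
  have hga : g a = -ρ := by
    have ha2 : a / 2 = (m : ℝ) * π := by rw [ha_def]; ring
    rw [hg_def]
    simp only [ha2, Real.sin_nat_mul_pi]
    have hcm : Real.cos ((m : ℝ) * π) = ε := by
      rw [show ((m : ℝ) * π) = 0 + (m : ℝ) * π by ring, Real.cos_add_nat_mul_pi, Real.cos_zero,
        mul_one, hε_def]
    rw [hcm]
    calc ε * (a * 0 - ρ * ε) = -ρ * (ε * ε) := by ring
    _ = -ρ := by rw [hε, mul_one]
  have hgb : g b = b := by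
    have hb2 : b / 2 = (m : ℝ) * π + π / 2 := by rw [hb_def]; ring
    have hsm : Real.sin (b / 2) = ε := by
      rw [hb2, show ((m : ℝ) * π + π / 2) = π / 2 + (m : ℝ) * π by ring,
        Real.sin_add_nat_mul_pi, Real.sin_pi_div_two, mul_one, hε_def]
    have hcm : Real.cos (b / 2) = 0 := by
      rw [hb2, show ((m : ℝ) * π + π / 2) = π / 2 + (m : ℝ) * π by ring,
        Real.cos_add_nat_mul_pi, Real.cos_pi_div_two, mul_zero]
    rw [hg_def]
    simp only [hsm, hcm]
    calc ε * (b * ε - ρ * 0) = b * (ε * ε) := by ring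
    _ = b := by rw [hε, mul_one]
  have hbpos : 0 < b := lt_of_le_of_lt ha0 hab
  have hzero : (0 : ℝ) ∈ Set.Ioo (g a) (g b) := by
    rw [hga, hgb]; exact ⟨by linarith, hbpos⟩
  obtain ⟨τ, hτmem, hτ0⟩ := intermediate_value_Ioo hab.le hgc.continuousOn hzero
  refine ⟨τ, ⟨hτmem, ?_⟩, ?_⟩
  · have : ε * (τ * Real.sin (τ / 2) - ρ * Real.cos (τ / 2)) = 0 := hτ0
    rcases mul_eq_zero.mp this with h | h
    · exact absurd h hεne
    · exact h
  · rintro y ⟨hymem, hy0⟩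
    have hgy : g y = 0 := by rw [hg_def]; simp only [hy0, mul_zero]
    have hgτ : g τ = 0 := hτ0
    exact hmono.injOn (Set.mem_Icc_of_Ioo hymem) (Set.mem_Icc_of_Ioo hτmem) (by rw [hgy, hgτ])
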